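/- arXiv:math-ph/0210036 — 3 statements merged into one kernel-verified Lean document; each statement's English description precedes it below -/
import Mathlib

section
/- For density matrices (positive semidefinite matrices of trace one) γ and ω on a finite-dimensional complex inner product space, with ω positive definite, for every Hermitian matrix h and every δ > 0, one has Tr(γ h) ≤ δ⁻¹ log Tr(exp(δ h + log ω)) + δ⁻¹ S(γ|ω), where S(γ|ω) = Tr(γ (log γ - log ω)) is the quantum relative entropy. -/
open Matrix
open scoped ComplexOrder

/-- Functional-calculus logarithm of a Hermitian matrix (junk value `0` otherwise). -/
noncomputable def matLog {n : ℕ} (A : Matrix (Fin n) (Fin n) ℂ) : Matrix (Fin n) (Fin n) ℂ :=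
  if hA : A.IsHermitian then
    (hA.eigenvectorUnitary : Matrix (Fin n) (Fin n) ℂ) *
      Matrix.diagonal (fun i => (Real.log (hA.eigenvalues i) : ℂ)) *
      star (hA.eigenvectorUnitary : Matrix (Fin n) (Fin n) ℂ)
  else 0

/-- `Tr(A log A)` via eigenvalues, with the convention `0 log 0 = 0`
(automatic since `Real.log 0 = 0`). -/
noncomputable def trXlogX {n : ℕ} (A : Matrix (Fin n) (Fin n) ℂ) : ℝ :=
  if hA : A.IsHermitian then ∑ i, hA.eigenvalues i * Real.log (hA.eigenvalues i) else 0

/-- A density matrix: positive semidefinite with unit trace. -/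
def IsDensityMatrix {n : ℕ} (A : Matrix (Fin n) (Fin n) ℂ) : Prop :=
  A.PosSemidef ∧ A.trace = 1

/-- Quantum relative entropy `S(γ|ω) = Tr(γ log γ) - Tr(γ log ω)`. -/
noncomputable def relEntropy {n : ℕ} (γ ω : Matrix (Fin n) (Fin n) ℂ) : ℝ :=
  trXlogX γ - ((γ * matLog ω).trace).re

private lemma klein_scalar {t s : ℝ} (ht : 0 ≤ t) (hs : 0 < s) :
    t * Real.log s - t * Real.log t ≤ s - t := by
  rcases eq_or_lt_of_le ht with h | h
  · simp [← h, hs.le]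
  · have h1 : Real.log (s / t) ≤ s / t - 1 := Real.log_le_sub_one_of_pos (by positivity)
    rw [Real.log_div hs.ne' h.ne'] at h1
    have h2 := mul_le_mul_of_nonneg_left h1 ht
    calc t * Real.log s - t * Real.log t = t * (Real.log s - Real.log t) := by ring
      _ ≤ t * (s / t - 1) := h2
      _ = s - t := by field_simp

private lemma trace_conj {n : ℕ} (V X : Matrix (Fin n) (Fin n) ℂ)
    (hV : star V * V = 1) : (V * X * star V).trace = X.trace := by
  rw [trace_mul_cycle, hV, one_mul]

private lemma matLog_isHermitian {n : ℕ} {A : Matrix (Fin n) (Fin n) ℂ}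
    (hA : A.IsHermitian) : (matLog A).IsHermitian := by
  rw [matLog, dif_pos hA]
  have hD : (Matrix.diagonal (fun i => (Real.log (hA.eigenvalues i) : ℂ))).IsHermitian := by
    have hfun : (star fun i => ((Real.log (hA.eigenvalues i) : ℝ) : ℂ))
        = fun i => ((Real.log (hA.eigenvalues i) : ℝ) : ℂ) :=
      funext fun i => Complex.conj_ofReal _
    rw [Matrix.IsHermitian, diagonal_conjTranspose, hfun]
  rw [Matrix.IsHermitian, conjTranspose_mul, conjTranspose_mul, hD]
  rw [← star_eq_conjTranspose, ← star_eq_conjTranspose, star_star, mul_assoc]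

/-- The Gibbs variational principle: `Re Tr(γ A) ≤ log Re Tr e^A + Tr(γ log γ)`. -/
private lemma gibbs {n : ℕ} (γ A : Matrix (Fin n) (Fin n) ℂ) (hγ : γ.PosSemidef)
    (ht : γ.trace = 1) (hA : A.IsHermitian) :
    ((γ * A).trace).re ≤ Real.log (((NormedSpace.exp A).trace).re) + trXlogX γ := by
  have hn : n ≠ 0 := by
    rintro rfl
    simp [Matrix.trace] at ht
  haveI : Nonempty (Fin n) := Fin.pos_iff_nonempty.mp (Nat.pos_of_ne_zero hn)
  have hγh : γ.IsHermitian := hγ.1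
  set V : Matrix (Fin n) (Fin n) ℂ := (hγh.eigenvectorUnitary : Matrix (Fin n) (Fin n) ℂ)
    with hVdef
  set U : Matrix (Fin n) (Fin n) ℂ := (hA.eigenvectorUnitary : Matrix (Fin n) (Fin n) ℂ)
    with hUdef
  set p : Fin n → ℝ := hγh.eigenvalues with hpdef
  set l : Fin n → ℝ := hA.eigenvalues with hldef
  have hV1 : star V * V = 1 := (Matrix.mem_unitaryGroup_iff').mp (hγh.eigenvectorUnitary).2
  have hV2 : V * star V = 1 := (Matrix.mem_unitaryGroup_iff).mp (hγh.eigenvectorUnitary).2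
  have hU1 : star U * U = 1 := (Matrix.mem_unitaryGroup_iff').mp (hA.eigenvectorUnitary).2
  have hU2 : U * star U = 1 := (Matrix.mem_unitaryGroup_iff).mp (hA.eigenvectorUnitary).2
  set W : Matrix (Fin n) (Fin n) ℂ := star V * U with hWdef
  have hW1 : W * star W = 1 := by
    rw [hWdef, StarMul.star_mul, star_star, mul_assoc, ← mul_assoc U, hU2, one_mul, hV1]
  have hW2 : star W * W = 1 := by
    rw [hWdef, StarMul.star_mul, star_star, mul_assoc, ← mul_assoc V, hV2, one_mul, hU1]
  set c : Fin n → Fin n → ℝ := fun i j => Complex.normSq (W i j) with hcdef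
  have hcnn : ∀ i j, 0 ≤ c i j := fun i j => Complex.normSq_nonneg _
  have hrow : ∀ i, ∑ j, c i j = 1 := by
    intro i
    have h1 := congrFun (congrFun hW1 i) i
    rw [Matrix.mul_apply, Matrix.one_apply_eq] at h1
    have h2 : (((∑ j, c i j : ℝ)) : ℂ) = 1 := by
      rw [← h1]
      push_cast
      refine Finset.sum_congr rfl fun j _ => ?_
      simp only [hcdef]
      rw [Matrix.star_apply]
      exact (Complex.mul_conj _).symm
    exact_mod_cast h2
  have hcol : ∀ j, ∑ i, c i j = 1 := by
    intro j
    have h1 := congrFun (congrFun hW2 j) j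
    rw [Matrix.mul_apply, Matrix.one_apply_eq] at h1
    have h2 : (((∑ i, c i j : ℝ)) : ℂ) = 1 := by
      rw [← h1]
      push_cast
      refine Finset.sum_congr rfl fun i _ => ?_
      simp only [hcdef]
      rw [Matrix.star_apply, mul_comm]
      exact (Complex.mul_conj _).symm
    exact_mod_cast h2
  have hpnn : ∀ i, 0 ≤ p i := hγ.eigenvalues_nonneg
  have hpsum : ∑ i, p i = 1 := by
    have h1 : γ.trace = ∑ i, (p i : ℂ) := by
      conv_lhs => rw [hγh.spectral_theorem, Unitary.conjStarAlgAut_apply]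
      rw [← hVdef, ← hpdef, trace_conj _ _ hV1, trace_diagonal]
      rfl
    rw [ht] at h1
    have h3 : (((∑ i, p i : ℝ)) : ℂ) = 1 := by push_cast; rw [← h1]
    exact_mod_cast h3
  -- trace of γ * A
  have htr : ((γ * A).trace).re = ∑ i, ∑ j, c i j * (p i * l j) := by
    have hγA : γ * A = V * (Matrix.diagonal (RCLike.ofReal ∘ p) * W *
        Matrix.diagonal (RCLike.ofReal ∘ l) * star W) * star V := by
      conv_lhs => rw [hγh.spectral_theorem, hA.spectral_theorem, Unitary.conjStarAlgAut_apply,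
        Unitary.conjStarAlgAut_apply]
      rw [← hVdef, ← hUdef, ← hpdef, ← hldef, hWdef, StarMul.star_mul, star_star]
      simp only [Matrix.mul_assoc]
      rw [hV2, mul_one]
    rw [hγA, trace_conj _ _ hV1]
    have hentry : (Matrix.diagonal (RCLike.ofReal ∘ p) * W * Matrix.diagonal (RCLike.ofReal ∘ l)
        * star W).trace = ∑ i, ∑ j, ((c i j * (p i * l j) : ℝ) : ℂ) := by
      rw [Matrix.trace]
      refine Finset.sum_congr rfl fun i _ => ?_
      rw [Matrix.diag_apply, Matrix.mul_apply]
      refine Finset.sum_congr rfl fun j _ => ?_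
      rw [Matrix.mul_diagonal, Matrix.diagonal_mul, Matrix.star_apply]
      simp only [hcdef, Function.comp_apply,
        show (RCLike.ofReal : ℝ → ℂ) = Complex.ofReal from rfl]
      rw [show (((p i : ℝ) : ℂ)) * W i j * ((l j : ℝ) : ℂ) * star (W i j)
          = ((p i : ℝ) : ℂ) * ((l j : ℝ) : ℂ) * (W i j * star (W i j)) by ring]
      rw [show (W i j * star (W i j)) = ((Complex.normSq (W i j) : ℝ) : ℂ) from
        Complex.mul_conj _]
      push_cast
      ring
    rw [hentry]
    have hcast : (∑ i, ∑ j, ((c i j * (p i * l j) : ℝ) : ℂ))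
        = ((∑ i, ∑ j, c i j * (p i * l j) : ℝ) : ℂ) := by push_cast; rfl
    rw [hcast, Complex.ofReal_re]
  -- trace of exp A
  set Z : ℝ := ∑ j, Real.exp (l j) with hZdef
  have hZpos : 0 < Z := Finset.sum_pos (fun j _ => Real.exp_pos _) Finset.univ_nonempty
  have hexp : ((NormedSpace.exp A).trace).re = Z := by
    let Uu : (Matrix (Fin n) (Fin n) ℂ)ˣ := ⟨U, star U, hU2, hU1⟩
    have hAeq : A = (Uu : Matrix (Fin n) (Fin n) ℂ) * Matrix.diagonal (RCLike.ofReal ∘ l) *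
        ((Uu⁻¹ : (Matrix (Fin n) (Fin n) ℂ)ˣ) : Matrix (Fin n) (Fin n) ℂ) := by
      show A = U * Matrix.diagonal (RCLike.ofReal ∘ l) * star U
      conv_lhs => rw [hA.spectral_theorem, Unitary.conjStarAlgAut_apply]
    have hfun : NormedSpace.exp ((RCLike.ofReal ∘ l : Fin n → ℂ))
        = fun j => Complex.exp ((l j : ℂ)) := by
      funext j
      rw [Pi.coe_exp, ← Complex.exp_eq_exp_ℂ]
      rfl
    have hexpA : NormedSpace.exp A
        = U * Matrix.diagonal (fun j => Complex.exp ((l j : ℂ))) * star U := by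
      rw [hAeq, Matrix.exp_units_conj, Matrix.exp_diagonal, hfun]
      rfl
    rw [hexpA, trace_conj _ _ hU1, trace_diagonal]
    have h4 : (∑ j, Complex.exp ((l j : ℂ))) = ((Z : ℝ) : ℂ) := by
      rw [hZdef]
      push_cast
      rfl
    rw [h4, Complex.ofReal_re]
  -- Tr γ log γ
  have hxlogx : trXlogX γ = ∑ i, p i * Real.log (p i) := by
    rw [trXlogX, dif_pos hγh]
  -- the scalar estimate, weighted
  have key : ∀ i j, c i j * (p i * l j) ≤ c i j * (p i * Real.log (p i))
      + c i j * (p i * Real.log Z) + c i j * (Real.exp (l j) / Z) - c i j * p i := by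
    intro i j
    have hs : (0:ℝ) < Real.exp (l j) / Z := by positivity
    have h1 := klein_scalar (hpnn i) hs
    rw [Real.log_div (Real.exp_pos _).ne' hZpos.ne', Real.log_exp] at h1
    have h2 : p i * l j ≤ p i * Real.log (p i) + p i * Real.log Z
        + Real.exp (l j) / Z - p i := by nlinarith [h1]
    nlinarith [mul_le_mul_of_nonneg_left h2 (hcnn i j)]
  have hsum := Finset.sum_le_sum fun i (_ : i ∈ Finset.univ) =>
    Finset.sum_le_sum fun j (_ : j ∈ Finset.univ) => key i j
  have e1 : ∑ i, ∑ j, c i j * (p i * Real.log (p i)) = ∑ i, p i * Real.log (p i) := by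
    refine Finset.sum_congr rfl fun i _ => ?_
    rw [← Finset.sum_mul, hrow i, one_mul]
  have e2 : ∑ i, ∑ j, c i j * (p i * Real.log Z) = Real.log Z := by
    have h5 : ∀ i, ∑ j, c i j * (p i * Real.log Z) = p i * Real.log Z := by
      intro i; rw [← Finset.sum_mul, hrow i, one_mul]
    rw [Finset.sum_congr rfl fun i _ => h5 i, ← Finset.sum_mul, hpsum, one_mul]
  have e3 : ∑ i, ∑ j, c i j * (Real.exp (l j) / Z) = 1 := by
    rw [Finset.sum_comm]
    have h6 : ∀ j, ∑ i, c i j * (Real.exp (l j) / Z) = Real.exp (l j) / Z := by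
      intro j; rw [← Finset.sum_mul, hcol j, one_mul]
    rw [Finset.sum_congr rfl fun j _ => h6 j, ← Finset.sum_div, ← hZdef,
      div_self hZpos.ne']
  have e4 : ∑ i, ∑ j, c i j * p i = 1 := by
    have h7 : ∀ i, ∑ j, c i j * p i = p i := by
      intro i; rw [← Finset.sum_mul, hrow i, one_mul]
    rw [Finset.sum_congr rfl fun i _ => h7 i, hpsum]
  rw [htr, hexp, hxlogx]
  have hfinal : ∑ i, ∑ j, (c i j * (p i * Real.log (p i))
      + c i j * (p i * Real.log Z) + c i j * (Real.exp (l j) / Z) - c i j * p i)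
      = (∑ i, p i * Real.log (p i)) + Real.log Z + 1 - 1 := by
    simp only [Finset.sum_add_distrib, Finset.sum_sub_distrib]
    rw [e1, e2, e3, e4]
  rw [hfinal] at hsum
  linarith

/-- The quantum entropy inequality:
`Tr(γ h) ≤ δ⁻¹ log Tr e^{δh + log ω} + δ⁻¹ S(γ|ω)`. -/
theorem entropy_inequality {n : ℕ} (γ ω h : Matrix (Fin n) (Fin n) ℂ)
    (hγ : IsDensityMatrix γ) (hω : IsDensityMatrix ω) (hωpd : ω.PosDef)
    (hh : h.IsHermitian) (δ : ℝ) (hδ : 0 < δ) :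
    ((γ * h).trace).re ≤
      δ⁻¹ * Real.log (((NormedSpace.exp (δ • h + matLog ω)).trace).re) +
        δ⁻¹ * relEntropy γ ω := by
  obtain ⟨hγpsd, hγtr⟩ := hγ
  have hωh : ω.IsHermitian := hω.1.1
  have hδh : (δ • h).IsHermitian := by
    rw [Matrix.IsHermitian, Matrix.conjTranspose_smul, hh, star_trivial]
  have hA : (δ • h + matLog ω).IsHermitian := hδh.add (matLog_isHermitian hωh)
  have hgibbs := gibbs γ (δ • h + matLog ω) hγpsd hγtr hA
  have hsplit : ((γ * (δ • h + matLog ω)).trace).re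
      = δ * ((γ * h).trace).re + ((γ * matLog ω).trace).re := by
    rw [mul_add, trace_add, mul_smul_comm, trace_smul, Complex.add_re, Complex.smul_re]
    rfl
  rw [hsplit] at hgibbs
  rw [relEntropy]
  have h2 : ((γ * h).trace).re ≤ δ⁻¹ *
      (Real.log (((NormedSpace.exp (δ • h + matLog ω)).trace).re)
      + (trXlogX γ - ((γ * matLog ω).trace).re)) := by
    rw [le_inv_mul_iff₀ hδ]
    linarith
  linarith [h2, mul_add δ⁻¹
    (Real.log (((NormedSpace.exp (δ • h + matLog ω)).trace).re))
    (trXlogX γ - ((γ * matLog ω).trace).re)]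
end

section
/- The Gibbs variational principle: for a Hermitian matrix H on a finite-dimensional complex inner product space, log Tr(e^H) = sup over density matrices γ of (Tr(γH) − Tr(γ log γ)), and the supremum is uniquely attained at γ = e^H / Tr(e^H). -/
open Matrix
open scoped ComplexOrder

/-- the scalar Klein inequality with equality case -/
lemma klein_term {p q : ℝ} (hp : 0 ≤ p) (hq : 0 < q) :
    0 ≤ p * Real.log p - p * Real.log q - p + q ∧
      (p * Real.log p - p * Real.log q - p + q = 0 → p = q) := by
  rcases eq_or_lt_of_le hp with h | hp0
  · constructor
    · simp [← h]; linarith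
    · intro h0; simp [← h] at h0; linarith
  · have hlog : Real.log q - Real.log p ≤ q / p - 1 := by
      rw [← Real.log_div hq.ne' hp0.ne']
      exact Real.log_le_sub_one_of_pos (div_pos hq hp0)
    have h1 : p * (Real.log q - Real.log p) ≤ p * (q / p - 1) :=
      mul_le_mul_of_nonneg_left hlog hp0.le
    have h2 : p * (q / p - 1) = q - p := by field_simp
    rw [mul_sub, h2] at h1
    constructor
    · linarith
    · intro h0
      by_contra hne
      have hne' : q / p ≠ 1 := fun hc => hne ((div_eq_one_iff_eq hp0.ne').mp hc).symm
      have hlt : Real.log q - Real.log p < q / p - 1 := by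
        rw [← Real.log_div hq.ne' hp0.ne']
        exact Real.log_lt_sub_one_of_pos (div_pos hq hp0) hne'
      have h1' : p * (Real.log q - Real.log p) < p * (q / p - 1) :=
        (mul_lt_mul_iff_right₀ hp0).mpr hlt
      rw [mul_sub, h2] at h1'
      linarith

lemma re_term (z : ℂ) (a b : ℝ) :
    (z * (a : ℂ) * star z * (b : ℂ)).re = Complex.normSq z * (a * b) := by
  have h : z * (a : ℂ) * star z * (b : ℂ) = ((Complex.normSq z * (a * b) : ℝ) : ℂ) := by
    rw [RCLike.star_def,
      show z * (a : ℂ) * (starRingEnd ℂ) z * (b : ℂ)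
        = z * (starRingEnd ℂ) z * ((a : ℂ) * (b : ℂ)) from by ring,
      Complex.mul_conj]
    push_cast
    ring
  rw [h, Complex.ofReal_re]

/-- conjugation by a unitary preserves positive definiteness -/
lemma posDef_conj_unitary {n : ℕ} {D : Matrix (Fin n) (Fin n) ℂ} (hD : D.PosDef)
    (U : Matrix (Fin n) (Fin n) ℂ) (hU : U * star U = 1) :
    (U * D * star U).PosDef := by
  refine Matrix.PosDef.of_dotProduct_mulVec_pos ?_ ?_
  · rw [star_eq_conjTranspose]
    exact isHermitian_mul_mul_conjTranspose U hD.1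
  · intro x hx
    have hx' : Uᴴ *ᵥ x ≠ 0 := by
      intro h
      apply hx
      have : U *ᵥ (Uᴴ *ᵥ x) = 0 := by rw [h, mulVec_zero]
      rwa [mulVec_mulVec, ← star_eq_conjTranspose, hU, one_mulVec] at this
    rw [star_eq_conjTranspose]
    simpa only [star_mulVec, dotProduct_mulVec, vecMul_vecMul, conjTranspose_conjTranspose]
      using hD.dotProduct_mulVec_pos hx'

/-- Klein's inequality with equality case, for `γ` PSD and `ω` positive definite. -/
lemma klein_matrix {n : ℕ} {γ ω : Matrix (Fin n) (Fin n) ℂ}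
    (hγ : γ.PosSemidef) (hω : ω.PosDef) :
    γ.trace.re - ω.trace.re ≤ trXlogX γ - ((γ * matLog ω).trace).re ∧
      (trXlogX γ - ((γ * matLog ω).trace).re = γ.trace.re - ω.trace.re → γ = ω) := by
  classical
  have hγ1 : γ.IsHermitian := hγ.1
  have hω1 : ω.IsHermitian := hω.1
  set U : Matrix (Fin n) (Fin n) ℂ := (hγ1.eigenvectorUnitary : Matrix (Fin n) (Fin n) ℂ)
    with hUdef
  set V : Matrix (Fin n) (Fin n) ℂ := (hω1.eigenvectorUnitary : Matrix (Fin n) (Fin n) ℂ)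
    with hVdef
  set p : Fin n → ℝ := hγ1.eigenvalues with hpdef
  set q : Fin n → ℝ := hω1.eigenvalues with hqdef
  have hp : ∀ i, 0 ≤ p i := hγ.eigenvalues_nonneg
  have hq : ∀ j, 0 < q j := hω.eigenvalues_pos
  have hUU : star U * U = 1 := mem_unitaryGroup_iff'.mp hγ1.eigenvectorUnitary.2
  have hUU' : U * star U = 1 := mem_unitaryGroup_iff.mp hγ1.eigenvectorUnitary.2
  have hVV : star V * V = 1 := mem_unitaryGroup_iff'.mp hω1.eigenvectorUnitary.2
  have hVV' : V * star V = 1 := mem_unitaryGroup_iff.mp hω1.eigenvectorUnitary.2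
  set P : Matrix (Fin n) (Fin n) ℂ := diagonal (fun i => (p i : ℂ)) with hPdef
  set L : Matrix (Fin n) (Fin n) ℂ := diagonal (fun j => (Real.log (q j) : ℂ)) with hLdef
  have hγdecomp : γ = U * P * star U := hγ1.spectral_theorem
  have hωdecomp : ω = V * diagonal (fun j => (q j : ℂ)) * star V := hω1.spectral_theorem
  have hmatlog : matLog ω = V * L * star V := by
    unfold matLog
    rw [dif_pos hω1]
  set W : Matrix (Fin n) (Fin n) ℂ := star V * U with hWdef
  have hWW' : W * star W = 1 := by
    rw [hWdef, StarMul.star_mul, star_star, mul_assoc, ← mul_assoc U (star U) V, hUU', one_mul, hVV]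
  have hWW : star W * W = 1 := by
    rw [hWdef, StarMul.star_mul, star_star, mul_assoc, ← mul_assoc V (star V) U, hVV', one_mul, hUU]
  set c : Fin n → Fin n → ℝ := fun j i => Complex.normSq (W j i) with hcdef
  -- row and column sums of the doubly stochastic matrix c
  have hrow : ∀ j, ∑ i, c j i = 1 := by
    intro j
    have h1 : (∑ i, W j i * star (W j i)) = 1 := by
      have := congrFun (congrFun hWW' j) j
      rwa [Matrix.mul_apply, Matrix.one_apply_eq] at this
    have h2 : ((∑ i, c j i : ℝ) : ℂ) = 1 := by
      push_cast
      rw [← h1]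
      refine Finset.sum_congr rfl fun i _ => ?_
      rw [hcdef, RCLike.star_def, Complex.mul_conj]
    exact_mod_cast h2
  have hcol : ∀ i, ∑ j, c j i = 1 := by
    intro i
    have h1 : (∑ j, star (W j i) * W j i) = 1 := by
      have := congrFun (congrFun hWW i) i
      rwa [Matrix.mul_apply, Matrix.one_apply_eq] at this
    have h2 : ((∑ j, c j i : ℝ) : ℂ) = 1 := by
      push_cast
      rw [← h1]
      refine Finset.sum_congr rfl fun j _ => ?_
      rw [hcdef, RCLike.star_def, mul_comm, Complex.mul_conj]
    exact_mod_cast h2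
  -- trace formulas
  have hkey : γ * matLog ω = V * (W * P * star W * L) * star V := by
    rw [hγdecomp, hmatlog, hWdef, StarMul.star_mul, star_star]
    simp only [mul_assoc]
    rw [← mul_assoc V (star V), hVV', one_mul]
  have htrace1 : ((γ * matLog ω).trace).re = ∑ j, ∑ i, c j i * (p i * Real.log (q j)) := by
    rw [hkey, trace_mul_cycle, ← mul_assoc, hVV, one_mul]
    have : (W * P * star W * L).trace = ∑ j, ∑ i, W j i * (p i : ℂ) * star (W j i)
        * (Real.log (q j) : ℂ) := by
      rw [Matrix.trace]
      refine Finset.sum_congr rfl fun j _ => ?_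
      rw [Matrix.diag, hLdef, Matrix.mul_diagonal, Matrix.mul_apply, Finset.sum_mul]
      refine Finset.sum_congr rfl fun i _ => ?_
      rw [hPdef, Matrix.mul_diagonal, Matrix.star_apply]
    rw [this, Complex.re_sum]
    refine Finset.sum_congr rfl fun j _ => ?_
    rw [Complex.re_sum]
    refine Finset.sum_congr rfl fun i _ => ?_
    exact re_term _ _ _
  have htraceγ : γ.trace.re = ∑ i, p i := by
    rw [hγdecomp, trace_mul_cycle, hUU, one_mul, hPdef, trace_diagonal, Complex.re_sum]
    simp
  have htraceω : ω.trace.re = ∑ j, q j := by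
    rw [hωdecomp, trace_mul_cycle, hVV, one_mul, trace_diagonal, Complex.re_sum]
    simp
  have hxlogx : trXlogX γ = ∑ i, p i * Real.log (p i) := by
    unfold trXlogX
    rw [dif_pos hγ1]
  -- the master sum
  set S : ℝ := ∑ j, ∑ i, c j i *
      (p i * Real.log (p i) - p i * Real.log (q j) - p i + q j) with hSdef
  have hterm_nonneg : ∀ j i, 0 ≤ c j i *
      (p i * Real.log (p i) - p i * Real.log (q j) - p i + q j) :=
    fun j i => mul_nonneg (Complex.normSq_nonneg _) (klein_term (hp i) (hq j)).1
  have hSsplit : S = (trXlogX γ - ((γ * matLog ω).trace).re) - γ.trace.re + ω.trace.re := by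
    have e1 : ∑ j, ∑ i, c j i * (p i * Real.log (p i)) = ∑ i, p i * Real.log (p i) := by
      rw [Finset.sum_comm]
      refine Finset.sum_congr rfl fun i _ => ?_
      rw [← Finset.sum_mul, hcol i, one_mul]
    have e3 : ∑ j, ∑ i, c j i * p i = ∑ i, p i := by
      rw [Finset.sum_comm]
      refine Finset.sum_congr rfl fun i _ => ?_
      rw [← Finset.sum_mul, hcol i, one_mul]
    have e4 : ∑ j, ∑ i, c j i * q j = ∑ j, q j := by
      refine Finset.sum_congr rfl fun j _ => ?_
      rw [← Finset.sum_mul, hrow j, one_mul]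
    rw [hSdef]
    simp only [mul_sub, mul_add, Finset.sum_sub_distrib, Finset.sum_add_distrib]
    rw [e1, e3, e4, htrace1, htraceγ, htraceω, hxlogx]
  constructor
  · have hS : 0 ≤ S := Finset.sum_nonneg fun j _ =>
      Finset.sum_nonneg fun i _ => hterm_nonneg j i
    linarith [hSsplit]
  · intro heq
    have hS0 : S = 0 := by rw [hSsplit]; linarith
    have hzero : ∀ j i, c j i *
        (p i * Real.log (p i) - p i * Real.log (q j) - p i + q j) = 0 := by
      intro j i
      have h1 := (Finset.sum_eq_zero_iff_of_nonneg
        (fun j _ => Finset.sum_nonneg fun i _ => hterm_nonneg j i)).mp hS0 j (Finset.mem_univ j)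
      exact (Finset.sum_eq_zero_iff_of_nonneg
        (fun i _ => hterm_nonneg j i)).mp h1 i (Finset.mem_univ i)
    have hpq : ∀ j i, W j i ≠ 0 → p i = q j := by
      intro j i hne
      have hc : c j i ≠ 0 := fun h => hne (Complex.normSq_eq_zero.mp h)
      have := mul_eq_zero.mp (hzero j i)
      rcases this with h | h
      · exact absurd h hc
      · exact (klein_term (hp i) (hq j)).2 h
    have hQ : W * P * star W = diagonal (fun j => (q j : ℂ)) := by
      ext j k
      rw [Matrix.mul_apply]
      have e : ∀ i, (W * P) j i * star W i k = (q j : ℂ) * (W j i * star (W k i)) := by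
        intro i
        rw [hPdef, Matrix.mul_diagonal, Matrix.star_apply]
        by_cases h : W j i = 0
        · simp [h]
        · rw [hpq j i h]; ring
      rw [Finset.sum_congr rfl fun i _ => e i, ← Finset.mul_sum]
      have e2 : ∑ i, W j i * star (W k i) = (1 : Matrix (Fin n) (Fin n) ℂ) j k := by
        rw [← hWW', Matrix.mul_apply]
        refine Finset.sum_congr rfl fun i _ => ?_
        rw [Matrix.star_apply]
      rw [e2]
      rcases eq_or_ne j k with h | h
      · subst h; rw [Matrix.one_apply_eq, Matrix.diagonal_apply_eq, mul_one]
      · rw [Matrix.one_apply_ne h, Matrix.diagonal_apply_ne _ h, mul_zero]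
    calc γ = U * P * star U := hγdecomp
      _ = V * (W * P * star W) * star V := by
          rw [hWdef, StarMul.star_mul, star_star]
          simp only [mul_assoc]
          rw [hVV', mul_one, ← mul_assoc V (star V), hVV', one_mul]
      _ = V * diagonal (fun j => (q j : ℂ)) * star V := by rw [hQ]
      _ = ω := hωdecomp.symm

lemma matLog_eq_cfc {n : ℕ} {A : Matrix (Fin n) (Fin n) ℂ} (hA : A.IsHermitian) :
    matLog A = cfc Real.log A := by
  rw [hA.cfc_eq Real.log]
  unfold matLog
  rw [dif_pos hA]
  rfl

lemma trace_mul_matLog_self {n : ℕ} {A : Matrix (Fin n) (Fin n) ℂ} (hA : A.IsHermitian) :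
    ((A * matLog A).trace).re = trXlogX A := by
  classical
  set V : Matrix (Fin n) (Fin n) ℂ := (hA.eigenvectorUnitary : Matrix (Fin n) (Fin n) ℂ)
  set q : Fin n → ℝ := hA.eigenvalues
  have hVV : star V * V = 1 := mem_unitaryGroup_iff'.mp hA.eigenvectorUnitary.2
  have hmatlog : matLog A = V * diagonal (fun j => (Real.log (q j) : ℂ)) * star V := by
    unfold matLog
    rw [dif_pos hA]
  have hdecomp : A = V * diagonal (fun j => (q j : ℂ)) * star V := hA.spectral_theorem
  have hkey : A * matLog A = V * (diagonal (fun j => (q j : ℂ)) *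
      diagonal (fun j => (Real.log (q j) : ℂ))) * star V := by
    conv_lhs => rw [hmatlog]
    conv_lhs => rw [hdecomp]
    simp only [mul_assoc]
    rw [← mul_assoc (star V) V, hVV, one_mul]
  rw [hkey, trace_mul_cycle, ← mul_assoc, hVV, one_mul, diagonal_mul_diagonal,
    trace_diagonal, Complex.re_sum]
  unfold trXlogX
  rw [dif_pos hA]
  refine Finset.sum_congr rfl fun j _ => ?_
  rw [← Complex.ofReal_mul, Complex.ofReal_re]

/-- The Gibbs variational principle: `log Tr e^H` is the supremum over density
matrices `γ` of `Tr(γ H) − Tr(γ log γ)`, uniquely attained at the Gibbs state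
`γ = e^H / Tr e^H`. -/
theorem gibbs_variational_principle {n : ℕ} (hn : 0 < n)
    (H : Matrix (Fin n) (Fin n) ℂ) (hH : H.IsHermitian) :
    IsGreatest {x : ℝ | ∃ γ, IsDensityMatrix γ ∧ x = ((γ * H).trace).re - trXlogX γ}
      (Real.log (((NormedSpace.exp H).trace).re)) ∧
    ∀ γ : Matrix (Fin n) (Fin n) ℂ, IsDensityMatrix γ →
      ((γ * H).trace).re - trXlogX γ = Real.log (((NormedSpace.exp H).trace).re) →
      γ = ((((NormedSpace.exp H).trace).re)⁻¹ : ℝ) • NormedSpace.exp H := by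
  classical
  have hHsa : IsSelfAdjoint H := hH
  set U : Matrix (Fin n) (Fin n) ℂ := (hH.eigenvectorUnitary : Matrix (Fin n) (Fin n) ℂ)
    with hUdef
  set l : Fin n → ℝ := hH.eigenvalues with hldef
  have hUU : star U * U = 1 := mem_unitaryGroup_iff'.mp hH.eigenvectorUnitary.2
  have hUU' : U * star U = 1 := mem_unitaryGroup_iff.mp hH.eigenvectorUnitary.2
  have hUunit : IsUnit U := ⟨⟨U, star U, hUU', hUU⟩, rfl⟩
  have hUinv : U⁻¹ = star U := inv_eq_right_inv hUU'
  have hexp : NormedSpace.exp H = U * diagonal (fun i => (Real.exp (l i) : ℂ)) * star U := by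
    conv_lhs => rw [hH.spectral_theorem, Unitary.conjStarAlgAut_apply]
    have harg2 : NormedSpace.exp ((RCLike.ofReal ∘ l : Fin n → ℂ)) =
        fun i => (Real.exp (l i) : ℂ) := by
      funext i
      rw [Pi.coe_exp]
      show NormedSpace.exp ((l i : ℂ)) = _
      rw [← Complex.exp_eq_exp_ℂ, Complex.ofReal_exp]
    rw [← hUinv, Matrix.exp_conj U _ hUunit, Matrix.exp_diagonal, harg2, hUinv]
  set Zr : ℝ := ∑ i, Real.exp (l i) with hZrdef
  have hZpos : 0 < Zr :=
    Finset.sum_pos (fun i _ => Real.exp_pos _) ⟨⟨0, hn⟩, Finset.mem_univ _⟩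
  have htrexp : (NormedSpace.exp H).trace = (Zr : ℂ) := by
    rw [hexp, trace_mul_cycle, hUU, one_mul, trace_diagonal]
    norm_cast
  have hZre : ((NormedSpace.exp H).trace).re = Zr := by rw [htrexp, Complex.ofReal_re]
  rw [hZre]
  set γ₀ : Matrix (Fin n) (Fin n) ℂ := (Zr⁻¹ : ℝ) • NormedSpace.exp H with hγ₀def
  have hγ₀decomp : γ₀ = U * diagonal (fun i => ((Zr⁻¹ * Real.exp (l i) : ℝ) : ℂ)) * star U := by
    have hD' : diagonal (fun i => ((Zr⁻¹ * Real.exp (l i) : ℝ) : ℂ)) =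
        (Zr⁻¹ : ℝ) • diagonal (fun i => (Real.exp (l i) : ℂ)) := by
      have harg : (fun i => ((Zr⁻¹ * Real.exp (l i) : ℝ) : ℂ)) =
          (Zr⁻¹ : ℝ) • (fun i => (Real.exp (l i) : ℂ)) := by
        funext i
        rw [Pi.smul_apply, Complex.real_smul, ← Complex.ofReal_mul]
      rw [harg, diagonal_smul]
    rw [hγ₀def, hexp, hD', mul_smul_comm, smul_mul_assoc]
  have hγ₀posdef : γ₀.PosDef := by
    rw [hγ₀decomp]
    refine posDef_conj_unitary (posDef_diagonal_iff.mpr fun i => ?_) U hUU'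
    exact_mod_cast mul_pos (inv_pos.mpr hZpos) (Real.exp_pos _)
  have htraceγ₀ : γ₀.trace = 1 := by
    rw [hγ₀def, trace_smul, htrexp, Complex.real_smul, ← Complex.ofReal_mul,
      inv_mul_cancel₀ hZpos.ne', Complex.ofReal_one]
  have hdens₀ : IsDensityMatrix γ₀ := ⟨hγ₀posdef.posSemidef, htraceγ₀⟩
  have hcH : ∀ f : ℝ → ℝ, ContinuousOn f (spectrum ℝ H) :=
    fun f => (Matrix.finite_real_spectrum (A := H)).continuousOn f
  have hcimg : ContinuousOn Real.log ((fun x => Zr⁻¹ * Real.exp x) '' spectrum ℝ H) :=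
    ((Matrix.finite_real_spectrum (A := H)).image _).continuousOn Real.log
  have hexpcfc : NormedSpace.exp H = cfc Real.exp H := by
    rw [hH.cfc_eq Real.exp, hexp]
    rfl
  have hγ₀cfc : γ₀ = cfc (fun x => Zr⁻¹ * Real.exp x) H := by
    rw [cfc_const_mul Zr⁻¹ Real.exp H (hcH _), ← hexpcfc, hγ₀def]
  have hmatlogγ₀ : matLog γ₀ = H - (Real.log Zr) • 1 := by
    rw [matLog_eq_cfc hγ₀posdef.1, hγ₀cfc,
      ← cfc_comp Real.log (fun x => Zr⁻¹ * Real.exp x) H hHsa hcimg (hcH _)]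
    have hfun : (Real.log ∘ fun x => Zr⁻¹ * Real.exp x) = fun x : ℝ => x - Real.log Zr := by
      funext x
      simp only [Function.comp_apply]
      rw [Real.log_mul (inv_ne_zero hZpos.ne') (Real.exp_ne_zero x), Real.log_inv, Real.log_exp]
      ring
    rw [hfun, cfc_sub (fun x : ℝ => x) (fun _ => Real.log Zr) H (hcH _) (hcH _),
      cfc_id' ℝ H, cfc_const (Real.log Zr) H, Algebra.algebraMap_eq_smul_one]
  have htr_matlog : ∀ γ : Matrix (Fin n) (Fin n) ℂ, γ.trace = 1 →
      ((γ * matLog γ₀).trace).re = ((γ * H).trace).re - Real.log Zr := by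
    intro γ h1
    rw [hmatlogγ₀, mul_sub, mul_smul_comm, mul_one, trace_sub, trace_smul, h1]
    rw [Complex.sub_re, Complex.real_smul, mul_one, Complex.ofReal_re]
  have hvalγ₀ : ((γ₀ * H).trace).re - trXlogX γ₀ = Real.log Zr := by
    have h1 := htr_matlog γ₀ htraceγ₀
    have h2 := trace_mul_matLog_self hγ₀posdef.1
    linarith
  have hmain : ∀ γ : Matrix (Fin n) (Fin n) ℂ, IsDensityMatrix γ →
      (((γ * H).trace).re - trXlogX γ ≤ Real.log Zr ∧
        (((γ * H).trace).re - trXlogX γ = Real.log Zr → γ = γ₀)) := by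
    intro γ ⟨hpsd, htr⟩
    have hk := klein_matrix hpsd hγ₀posdef
    have e0 : γ.trace.re = 1 := by rw [htr]; rfl
    have e1 : γ₀.trace.re = 1 := by rw [htraceγ₀]; rfl
    have e2 := htr_matlog γ htr
    constructor
    · have := hk.1
      rw [e0, e1] at this
      linarith
    · intro heq
      have : trXlogX γ - ((γ * matLog γ₀).trace).re = γ.trace.re - γ₀.trace.re := by
        rw [e0, e1]
        linarith
      exact hk.2 this
  refine ⟨⟨⟨γ₀, hdens₀, hvalγ₀.symm⟩, ?_⟩, ?_⟩
  · rintro x ⟨γ, hγd, rfl⟩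
    exact (hmain γ hγd).1
  · intro γ hγd heq
    exact (hmain γ hγd).2 heq
end

section
/- Peierls–Bogoliubov inequality: for Hermitian matrices A and B on a finite-dimensional complex inner product space, log Tr e^{A+B} − log Tr e^{A} ≥ Tr(B e^{A}) / Tr(e^{A}). -/
open Matrix

/-- Jensen's inequality for `Real.exp`. -/
lemma jensen_exp' {ι : Type*} (s : Finset ι) (w x : ι → ℝ)
    (hw : ∀ i ∈ s, 0 ≤ w i) (hw1 : ∑ i ∈ s, w i = 1) :
    Real.exp (∑ i ∈ s, w i * x i) ≤ ∑ i ∈ s, w i * Real.exp (x i) := by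
  set S := ∑ i ∈ s, w i * x i with hS
  have key : ∀ i ∈ s, Real.exp S * (w i + (w i * x i) - S * w i) ≤ w i * Real.exp (x i) := by
    intro i hi
    have h1 : 1 + (x i - S) ≤ Real.exp (x i - S) := by
      have := Real.add_one_le_exp (x i - S); linarith
    have h2 : w i * Real.exp S * (1 + (x i - S)) ≤ w i * Real.exp S * Real.exp (x i - S) :=
      mul_le_mul_of_nonneg_left h1 (mul_nonneg (hw i hi) (Real.exp_pos S).le)
    calc Real.exp S * (w i + (w i * x i) - S * w i)
        = w i * Real.exp S * (1 + (x i - S)) := by ring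
      _ ≤ w i * Real.exp S * Real.exp (x i - S) := h2
      _ = w i * Real.exp (x i) := by rw [mul_assoc, ← Real.exp_add]; ring_nf
  calc Real.exp S = Real.exp S * ((∑ i ∈ s, w i) + (∑ i ∈ s, w i * x i) - S * ∑ i ∈ s, w i) := by
        rw [hw1, ← hS]; ring
    _ = ∑ i ∈ s, Real.exp S * (w i + (w i * x i) - S * w i) := by
        rw [← Finset.mul_sum, Finset.sum_sub_distrib, Finset.sum_add_distrib, ← Finset.mul_sum]
    _ ≤ ∑ i ∈ s, w i * Real.exp (x i) := Finset.sum_le_sum key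


lemma exp_hermitian_eq {n : ℕ} {M : Matrix (Fin n) (Fin n) ℂ} (hM : M.IsHermitian) :
    NormedSpace.exp M = (hM.eigenvectorUnitary : Matrix (Fin n) (Fin n) ℂ)
      * diagonal (fun i => (Real.exp (hM.eigenvalues i) : ℂ))
      * star (hM.eigenvectorUnitary : Matrix (Fin n) (Fin n) ℂ) := by
  set U : Matrix (Fin n) (Fin n) ℂ := (hM.eigenvectorUnitary : Matrix (Fin n) (Fin n) ℂ) with hU
  have hUnit : IsUnit U := ⟨Unitary.toUnits hM.eigenvectorUnitary, rfl⟩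
  have hinv : U⁻¹ = star U := inv_eq_left_inv (Matrix.mem_unitaryGroup_iff'.mp hM.eigenvectorUnitary.2)
  conv_lhs => rw [hM.spectral_theorem, Unitary.conjStarAlgAut_apply]
  rw [← hU, ← hinv, Matrix.exp_conj U _ hUnit, hinv, Matrix.exp_diagonal]
  have hfun : NormedSpace.exp (RCLike.ofReal ∘ hM.eigenvalues)
      = fun i => (Real.exp (hM.eigenvalues i) : ℂ) := by
    funext i
    rw [Pi.exp_def]
    simp [Function.comp, ← Complex.exp_eq_exp_ℂ, ← Complex.ofReal_exp]
  rw [hfun]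

lemma entry_re {n : ℕ} (V : Matrix (Fin n) (Fin n) ℂ) (d : Fin n → ℝ) (i : Fin n) :
    ((V * diagonal (fun j => (d j : ℂ)) * star V) i i).re
      = ∑ j, Complex.normSq (V i j) * d j := by
  rw [Matrix.star_eq_conjTranspose, Matrix.mul_apply, Complex.re_sum]
  apply Finset.sum_congr rfl
  intro j _
  rw [Matrix.mul_diagonal, Matrix.conjTranspose_apply, Complex.star_def,
    mul_comm (V i j) ((d j : ℂ)), mul_assoc, Complex.mul_conj, ← Complex.ofReal_mul]
  rw [Complex.ofReal_re]
  ring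

lemma row_normSq {n : ℕ} (V : Matrix.unitaryGroup (Fin n) ℂ) (i : Fin n) :
    ∑ j, Complex.normSq ((V : Matrix (Fin n) (Fin n) ℂ) i j) = 1 := by
  have h := entry_re (V : Matrix (Fin n) (Fin n) ℂ) (fun _ => 1) i
  simp only [Complex.ofReal_one, Matrix.diagonal_one, Matrix.mul_one, mul_one] at h
  rw [Matrix.mem_unitaryGroup_iff.mp V.2] at h
  simp [Matrix.one_apply] at h
  linarith [h]

lemma trace_conj_eq {n : ℕ} (V : Matrix.unitaryGroup (Fin n) ℂ)
    (D : Matrix (Fin n) (Fin n) ℂ) :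
    ((V : Matrix (Fin n) (Fin n) ℂ) * D * star (V : Matrix (Fin n) (Fin n) ℂ)).trace
      = D.trace := by
  rw [Matrix.trace_mul_comm, ← Matrix.mul_assoc, Matrix.mem_unitaryGroup_iff'.mp V.2, Matrix.one_mul]

/-- Peierls inequality. -/
lemma peierls {n : ℕ} {M : Matrix (Fin n) (Fin n) ℂ} (hM : M.IsHermitian) :
    ∑ i, Real.exp ((M i i).re) ≤ ((NormedSpace.exp M).trace).re := by
  set V : Matrix (Fin n) (Fin n) ℂ := (hM.eigenvectorUnitary : Matrix (Fin n) (Fin n) ℂ) with hV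
  have hdiag : ∀ i, (M i i).re = ∑ j, Complex.normSq (V i j) * hM.eigenvalues j := by
    intro i
    conv_lhs => rw [hM.spectral_theorem, Unitary.conjStarAlgAut_apply]
    have : (diagonal (RCLike.ofReal ∘ hM.eigenvalues) : Matrix (Fin n) (Fin n) ℂ)
        = diagonal (fun j => ((hM.eigenvalues j : ℝ) : ℂ)) := rfl
    rw [this, entry_re]
  have hexp : ∀ i, ((NormedSpace.exp M) i i).re
      = ∑ j, Complex.normSq (V i j) * Real.exp (hM.eigenvalues j) := by
    intro i
    rw [exp_hermitian_eq hM, entry_re]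
  have htr : ((NormedSpace.exp M).trace).re = ∑ i, ((NormedSpace.exp M) i i).re := by
    rw [Matrix.trace, Complex.re_sum]; rfl
  rw [htr]
  apply Finset.sum_le_sum
  intro i _
  rw [hdiag i, hexp i]
  exact jensen_exp' Finset.univ (fun j => Complex.normSq (V i j)) hM.eigenvalues
    (fun j _ => Complex.normSq_nonneg _) (row_normSq hM.eigenvectorUnitary i)


lemma trace_exp_conj {n : ℕ} (V : Matrix.unitaryGroup (Fin n) ℂ)
    (M : Matrix (Fin n) (Fin n) ℂ) :
    (NormedSpace.exp ((V : Matrix (Fin n) (Fin n) ℂ) * M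
        * star (V : Matrix (Fin n) (Fin n) ℂ))).trace
      = (NormedSpace.exp M).trace := by
  have hinv : (V : Matrix (Fin n) (Fin n) ℂ)⁻¹ = star (V : Matrix (Fin n) (Fin n) ℂ) :=
    inv_eq_left_inv (Matrix.mem_unitaryGroup_iff'.mp V.2)
  rw [← hinv, Matrix.exp_conj (V : Matrix (Fin n) (Fin n) ℂ) M
    ⟨Unitary.toUnits V, rfl⟩, hinv, trace_conj_eq]

lemma final_calc {n : ℕ} [NeZero n] (a b : Fin n → ℝ) (T : ℝ)
    (hT : ∑ i, Real.exp (a i + b i) ≤ T) :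
    (∑ i, b i * Real.exp (a i)) / (∑ i, Real.exp (a i))
      ≤ Real.log T - Real.log (∑ i, Real.exp (a i)) := by
  set Z : ℝ := ∑ i, Real.exp (a i) with hZ
  have hZpos : 0 < Z := Finset.sum_pos (fun i _ => Real.exp_pos _) Finset.univ_nonempty
  have hTpos : 0 < T :=
    lt_of_lt_of_le (Finset.sum_pos (fun i _ => Real.exp_pos _) Finset.univ_nonempty) hT
  have hw1 : ∑ i, Real.exp (a i) / Z = 1 := by
    rw [← Finset.sum_div, ← hZ, div_self hZpos.ne']
  have hkey : Real.exp (∑ i, (Real.exp (a i) / Z) * b i) ≤ T / Z := by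
    calc Real.exp (∑ i, (Real.exp (a i) / Z) * b i)
        ≤ ∑ i, (Real.exp (a i) / Z) * Real.exp (b i) :=
          jensen_exp' Finset.univ (fun i => Real.exp (a i) / Z) b
            (fun i _ => by positivity) hw1
      _ = (∑ i, Real.exp (a i + b i)) / Z := by
          rw [Finset.sum_div]
          exact Finset.sum_congr rfl fun i _ => by rw [Real.exp_add]; ring
      _ ≤ T / Z := by gcongr
  have h2 : ∑ i, (Real.exp (a i) / Z) * b i ≤ Real.log (T / Z) :=
    (Real.le_log_iff_exp_le (by positivity)).mpr hkey
  rw [Real.log_div hTpos.ne' hZpos.ne'] at h2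
  have h3 : ∑ i, (Real.exp (a i) / Z) * b i = (∑ i, b i * Real.exp (a i)) / Z := by
    rw [Finset.sum_div]
    exact Finset.sum_congr rfl fun i _ => by ring
  rw [h3] at h2
  exact h2

/-- Peierls–Bogoliubov inequality: for Hermitian matrices `A` and `B`,
`log Tr e^{A+B} − log Tr e^A ≥ Tr(B e^A) / Tr(e^A)`. -/
theorem peierls_bogoliubov {n : ℕ} (A B : Matrix (Fin n) (Fin n) ℂ)
    (hA : A.IsHermitian) (hB : B.IsHermitian) :
    ((B * NormedSpace.exp A).trace).re / ((NormedSpace.exp A).trace).re ≤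
      Real.log (((NormedSpace.exp (A + B)).trace).re) -
        Real.log (((NormedSpace.exp A).trace).re) := by
  rcases Nat.eq_zero_or_pos n with hn | hn
  · subst hn
    simp [Matrix.trace, Finset.univ_eq_empty]
  haveI : NeZero n := ⟨hn.ne'⟩
  set a : Fin n → ℝ := hA.eigenvalues with ha
  set C : Matrix (Fin n) (Fin n) ℂ :=
    star (hA.eigenvectorUnitary : Matrix (Fin n) (Fin n) ℂ) * B
      * (hA.eigenvectorUnitary : Matrix (Fin n) (Fin n) ℂ) with hC
  set b : Fin n → ℝ := fun i => (C i i).re with hb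
  have hUU : (hA.eigenvectorUnitary : Matrix (Fin n) (Fin n) ℂ)
      * star (hA.eigenvectorUnitary : Matrix (Fin n) (Fin n) ℂ) = 1 :=
    Matrix.mem_unitaryGroup_iff.mp hA.eigenvectorUnitary.2
  -- trace of exp A
  have hTrA : ((NormedSpace.exp A).trace).re = ∑ i, Real.exp (a i) := by
    rw [exp_hermitian_eq hA, trace_conj_eq hA.eigenvectorUnitary, Matrix.trace_diagonal,
      Complex.re_sum]
    simp only [Complex.ofReal_re]
    rfl
  -- trace of B * exp A
  have hTrBA : ((B * NormedSpace.exp A).trace).re = ∑ i, b i * Real.exp (a i) := by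
    rw [exp_hermitian_eq hA, ← Matrix.mul_assoc, ← Matrix.mul_assoc, Matrix.trace_mul_comm,
      ← Matrix.mul_assoc, ← Matrix.mul_assoc, ← hC]
    rw [Matrix.trace, Complex.re_sum]
    apply Finset.sum_congr rfl
    intro i _
    rw [Matrix.diag_apply, Matrix.mul_diagonal]
    simp only [Complex.mul_re, Complex.ofReal_re, Complex.ofReal_im, mul_zero, sub_zero]
    rfl
  -- Hermitian matrix M = diag a + C
  have hCH : C.IsHermitian := by
    rw [hC, Matrix.star_eq_conjTranspose]
    exact Matrix.isHermitian_conjTranspose_mul_mul _ hB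
  have hDH : (diagonal (fun i => (a i : ℂ))).IsHermitian := by
    exact Matrix.isHermitian_diagonal_of_self_adjoint _
      (Pi.isSelfAdjoint.mpr fun i => Complex.conj_ofReal _)
  have hMH : (diagonal (fun i => (a i : ℂ)) + C).IsHermitian := hDH.add hCH
  -- A + B conjugated
  have hABconj : A + B = (hA.eigenvectorUnitary : Matrix (Fin n) (Fin n) ℂ)
      * (diagonal (fun i => (a i : ℂ)) + C)
      * star (hA.eigenvectorUnitary : Matrix (Fin n) (Fin n) ℂ) := by
    rw [Matrix.mul_add, Matrix.add_mul]
    congr 1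
    · exact hA.spectral_theorem
    · rw [hC, ← Matrix.mul_assoc, ← Matrix.mul_assoc, hUU, Matrix.one_mul,
        Matrix.mul_assoc, hUU, Matrix.mul_one]
  -- Peierls step
  have hPei : ∑ i, Real.exp (a i + b i) ≤ ((NormedSpace.exp (A + B)).trace).re := by
    rw [hABconj, trace_exp_conj]
    have := peierls hMH
    refine le_trans (le_of_eq ?_) this
    apply Finset.sum_congr rfl
    intro i _
    congr 1
    simp [hb, Matrix.diagonal_apply_eq]
  rw [hTrA, hTrBA]
  exact final_calc a b _ hPei
end
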